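/- The K3 monodromy matrices are expressed through the map R in terms of the generators of Γ₀(6)₊: regarding all matrices over ℝ, M₀ = R(T₀⁻¹), M_{a₁} = −R(S₁), M_{a₂} = −R(S₂·S₁·S₂), and U = R(S₁·S₂). -/

import Mathlib

open Matrix

/-- `T₀ = [[1,1],[0,1]]`. -/
def T₀ : Matrix (Fin 2) (Fin 2) ℝ := !![1, 1; 0, 1]

/-- `S₁ = [[0,−1/√6],[√6,0]]`. -/
noncomputable def S₁ : Matrix (Fin 2) (Fin 2) ℝ := !![0, -1 / Real.sqrt 6; Real.sqrt 6, 0]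

/-- `S₂ = [[−√2,1/√2],[−3√2,√2]]`. -/
noncomputable def S₂ : Matrix (Fin 2) (Fin 2) ℝ :=
  !![-Real.sqrt 2, 1 / Real.sqrt 2; -3 * Real.sqrt 2, Real.sqrt 2]

/-- For a real 2×2 matrix `A = [[a,b],[c,d]]`, the 3×3 matrix
`R(A) = [[a², −2ac, −c²/6],[−ab, ad+bc, cd/6],[−6b², 12bd, d²]]`. -/
noncomputable def R (A : Matrix (Fin 2) (Fin 2) ℝ) : Matrix (Fin 3) (Fin 3) ℝ :=
  !![ (A 0 0)^2,        -2 * A 0 0 * A 1 0,               -(A 1 0)^2 / 6;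
      -(A 0 0 * A 0 1), A 0 0 * A 1 1 + A 0 1 * A 1 0,    A 1 0 * A 1 1 / 6;
      -6 * (A 0 1)^2,   12 * A 0 1 * A 1 1,               (A 1 1)^2 ]

/-- Monodromy matrix around `x = 0` (over ℝ). -/
def M₀ : Matrix (Fin 3) (Fin 3) ℝ := !![1, 0, 0; 1, 1, 0; -6, -12, 1]

/-- Monodromy matrix around `x = a₁` (over ℝ). -/
def Ma₁ : Matrix (Fin 3) (Fin 3) ℝ := !![0, 0, 1; 0, 1, 0; 1, 0, 0]

/-- Monodromy matrix around `x = a₂` (over ℝ). -/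
def Ma₂ : Matrix (Fin 3) (Fin 3) ℝ := !![-24, 120, 25; -10, 49, 10; 25, -120, -24]

/-- The connection matrix `U` (over ℝ). -/
def U : Matrix (Fin 3) (Fin 3) ℝ := !![3, 12, -2; 1, 5, -1; -2, -12, 3]

set_option maxHeartbeats 1000000 in
/-- The K3 monodromy matrices expressed through `R` in terms of the generators of
`Γ₀(6)₊`: `M₀ = R(T₀⁻¹)`, `M_{a₁} = −R(S₁)`, `M_{a₂} = −R(S₂S₁S₂)`, `U = R(S₁S₂)`. -/
theorem monodromies_via_R :
    M₀ = R T₀⁻¹ ∧ Ma₁ = -R S₁ ∧ Ma₂ = -R (S₂ * S₁ * S₂) ∧ U = R (S₁ * S₂) := by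
  have ha : Real.sqrt 6 ^ 2 = 6 := Real.sq_sqrt (by norm_num)
  have hb : Real.sqrt 2 ^ 2 = 2 := Real.sq_sqrt (by norm_num)
  have ha0 : Real.sqrt 6 ≠ 0 := by positivity
  have hb0 : Real.sqrt 2 ≠ 0 := by positivity
  have ha3 : Real.sqrt 6 ^ 3 = 6 * Real.sqrt 6 := by rw [pow_succ, ha]
  have hb3 : Real.sqrt 2 ^ 3 = 2 * Real.sqrt 2 := by rw [pow_succ, hb]
  have hT : T₀⁻¹ = !![1, -1; 0, 1] := Matrix.inv_eq_right_inv (by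
    ext i j; fin_cases i <;> fin_cases j <;>
      simp [T₀, Matrix.mul_apply, Fin.sum_univ_succ])
  have hS12 : S₁ * S₂ = !![Real.sqrt 6 * Real.sqrt 2 / 2, -(Real.sqrt 6 * Real.sqrt 2) / 6;
      -(Real.sqrt 6 * Real.sqrt 2), Real.sqrt 6 * Real.sqrt 2 / 2] := by
    ext i j
    fin_cases i <;> fin_cases j <;>
      · simp only [S₁, S₂, Matrix.mul_apply, Fin.sum_univ_succ, Fin.sum_univ_zero,
          Matrix.cons_val_zero, Matrix.cons_val_one, Matrix.head_cons,
          Matrix.cons_val', Matrix.empty_val', Matrix.cons_val_fin_one, Matrix.of_apply, Fin.isValue, Fin.zero_eta, Fin.mk_one,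
            Fin.succ_zero_eq_one, Matrix.cons_val, Fin.reduceFinMk]
        try field_simp
        try ring_nf
        try simp only [ha, hb, ha3, hb3, mul_pow]
        try norm_num
        try ring_nf
  have hS212 : S₂ * S₁ * S₂ = !![-2 * Real.sqrt 6, 5 * Real.sqrt 6 / 6;
      -5 * Real.sqrt 6, 2 * Real.sqrt 6] := by
    rw [Matrix.mul_assoc, hS12]
    ext i j
    fin_cases i <;> fin_cases j <;>
      · simp only [S₂, Matrix.mul_apply, Fin.sum_univ_succ, Fin.sum_univ_zero,
          Matrix.cons_val_zero, Matrix.cons_val_one, Matrix.head_cons,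
          Matrix.cons_val', Matrix.empty_val', Matrix.cons_val_fin_one, Matrix.of_apply, Fin.isValue, Fin.zero_eta, Fin.mk_one,
            Fin.succ_zero_eq_one, Matrix.cons_val, Fin.reduceFinMk]
        try field_simp
        try ring_nf
        try simp only [ha, hb, ha3, hb3, mul_pow]
        try norm_num
        try ring_nf
  rw [hT, hS12, hS212]
  refine ⟨?_, ?_, ?_, ?_⟩ <;>
  · ext i j
    fin_cases i <;> fin_cases j <;>
      · simp only [M₀, Ma₁, Ma₂, U, R, S₁, Matrix.neg_apply, Matrix.cons_val_zero,
          Matrix.cons_val_one, Matrix.head_cons, Matrix.cons_val', Matrix.empty_val',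
          Matrix.cons_val_fin_one, Matrix.of_apply, Fin.isValue, Fin.zero_eta, Fin.mk_one,
            Fin.succ_zero_eq_one, Matrix.cons_val, Fin.reduceFinMk]
        try field_simp
        try ring_nf
        try simp only [ha, hb, ha3, hb3, mul_pow]
        try norm_num
        try ring_nf
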